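/- If X is the set of subsums of a sequence (a_n) of nonnegative reals, then every term a_n belongs to the center of distances of X. -/

import Mathlib

noncomputable def centerOfDistances (X : Set ℝ) : Set ℝ :=
  {α | 0 ≤ α ∧ ∀ x ∈ X, ∃ y ∈ X, |x - y| = α}

noncomputable def subsums (a : ℕ → ℝ) : Set ℝ :=
  {x | ∃ A : Set ℕ, x = ∑' n : A, a n}

noncomputable def cantorval : Set ℝ :=
  {x | ∃ d : ℕ → ℝ, (∀ n, d n ∈ ({0, 2, 3, 5} : Set ℝ)) ∧
    x = ∑' n : ℕ, d n / 4 ^ (n + 1)}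

theorem stmt0 (a : ℕ → ℝ) (hpos : ∀ n, 0 ≤ a n) (hsum : Summable a) (n : ℕ) :
    a n ∈ centerOfDistances (subsums a) := by
  refine ⟨hpos n, ?_⟩
  rintro x ⟨A, rfl⟩
  by_cases hn : n ∈ A
  · refine ⟨∑' m : (A \ {n} : Set ℕ), a m, ⟨_, rfl⟩, ?_⟩
    have hA : A = insert n (A \ {n}) := by
      ext m; by_cases hm : m = n <;> simp [hm, hn]
    have h1 : ∑' m : A, a m = a n + ∑' m : (A \ {n} : Set ℕ), a m := by
      conv_lhs => rw [hA]
      conv_lhs => rw [Set.insert_eq]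
      rw [
        Summable.tsum_union_disjoint (by simp) ((Set.finite_singleton n).summable _)
          (hsum.subtype _), tsum_singleton]
    rw [h1]
    simp [abs_of_nonneg (hpos n)]
  · refine ⟨∑' m : (insert n A : Set ℕ), a m, ⟨_, rfl⟩, ?_⟩
    rw [Set.insert_eq,
      Summable.tsum_union_disjoint (by simpa using hn) ((Set.finite_singleton n).summable _)
        (hsum.subtype _), tsum_singleton]
    rw [abs_sub_comm]
    simp [abs_of_nonneg (hpos n)]
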